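/- For all η, p ∈ ℂ, the characteristic polynomial of the 6×6 matrix A∞(η,p) equals X²·(X⁴ − 4η X² − 4p²) in ℂ[X]. In particular 0 is an eigenvalue of algebraic multiplicity at least 2, and the nonzero eigenvalues σ satisfy σ⁴ − 4η σ² − 4p² = 0, i.e. σ² = 2η ± 2w with w² = η² + p². -/

import Mathlib

open Polynomial

noncomputable section

/-- The asymptotic matrix `A∞(η,p)` of the compound (`Λ²`) system obtained from the
linearization of the complex Ginzburg–Landau equation about the Hocking–Stewartson pulse. -/
def Ainf (η p : ℂ) : Matrix (Fin 6) (Fin 6) ℂ :=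
  Matrix.of
    ![![0, 0, 1, -1, 0, 0],
      ![-p, 0, 0, 0, 0, 0],
      ![η, 0, 0, 0, 0, 1],
      ![-η, 0, 0, 0, 0, -1],
      ![-p, 0, 0, 0, 0, 0],
      ![0, -p, η, -η, -p, 0]]

end

private lemma cons_val_five' {α : Type*} {m : ℕ} (x : α) (u : Fin (m+5) → α) :
    Matrix.vecCons x u 5 = u 4 := rfl

set_option maxRecDepth 100000 in
set_option maxHeartbeats 2000000 in
private lemma Ainf_charmatrix (η p : ℂ) : Matrix.charmatrix (Ainf η p) =
    Matrix.of ![![X, 0, -1, 1, 0, 0],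
      ![C p, X, 0, 0, 0, 0],
      ![-C η, 0, X, 0, 0, -1],
      ![C η, 0, 0, X, 0, 1],
      ![C p, 0, 0, 0, X, 0],
      ![0, C p, -C η, C η, C p, X]] := by
  apply Matrix.ext
  intro i j
  fin_cases i <;> fin_cases j <;>
    simp [Matrix.charmatrix_apply, Ainf, Matrix.one_apply, cons_val_five',
      Matrix.vecHead, Matrix.vecTail]

set_option maxRecDepth 100000 in
set_option maxHeartbeats 2000000 in
private lemma Ainf_charpoly_eq (η p : ℂ) :
    (Ainf η p).charpoly = X ^ 2 * (X ^ 4 - C (4 * η) * X ^ 2 - C (4 * p ^ 2)) := by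
  rw [Matrix.charpoly, Ainf_charmatrix]
  simp only [Matrix.det_succ_row_zero, Fin.sum_univ_succ, Fin.sum_univ_zero,
    Matrix.submatrix_apply, Matrix.of_apply, Fin.succAbove, Fin.castSucc, Fin.castAdd,
    Fin.castLE]
  norm_num [Fin.lt_def, Matrix.cons_val_zero, Matrix.cons_val_one]
  simp only [Fin.isValue, Matrix.cons_val]
  norm_num [Matrix.cons_val_succ, Matrix.cons_val_zero, Matrix.vecHead, Matrix.vecTail, Fin.succ]
  simp only [map_mul, map_ofNat]
  ring

/-- The characteristic polynomial of `A∞(η,p)` is `X²(X⁴ − 4ηX² − 4p²)`.  In particular `0`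
is an eigenvalue of algebraic multiplicity at least `2`, and every nonzero eigenvalue `σ`
satisfies `σ⁴ − 4ησ² − 4p² = 0`, i.e. `σ² = 2η ± 2w` with `w² = η² + p²`. -/
theorem Ainf_charpoly (η p : ℂ) :
    (Ainf η p).charpoly = X ^ 2 * (X ^ 4 - C (4 * η) * X ^ 2 - C (4 * p ^ 2)) ∧
    2 ≤ (Ainf η p).charpoly.rootMultiplicity 0 ∧
    (∀ σ : ℂ, σ ≠ 0 → (Ainf η p).charpoly.IsRoot σ →
      σ ^ 4 - 4 * η * σ ^ 2 - 4 * p ^ 2 = 0 ∧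
      ∃ w : ℂ, w ^ 2 = η ^ 2 + p ^ 2 ∧ (σ ^ 2 = 2 * η + 2 * w ∨ σ ^ 2 = 2 * η - 2 * w)) := by
  have hch := Ainf_charpoly_eq η p
  refine ⟨hch, ?_, ?_⟩
  · rw [Polynomial.le_rootMultiplicity_iff (Matrix.charpoly_monic (Ainf η p)).ne_zero]
    rw [hch]
    simpa using dvd_mul_right (X ^ 2) _
  · intro σ hσ hroot
    rw [hch] at hroot
    have h0 : σ ^ 4 - 4 * η * σ ^ 2 - 4 * p ^ 2 = 0 := by
      have := hroot
      simp only [IsRoot, eval_mul, eval_pow, eval_X, eval_sub, eval_C, eval_mul] at this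
      rcases mul_eq_zero.mp this with h | h
      · exact absurd (pow_eq_zero_iff (by norm_num) |>.mp h) hσ
      · exact h
    refine ⟨h0, ?_⟩
    obtain ⟨w, hw2⟩ := IsAlgClosed.exists_pow_nat_eq (η ^ 2 + p ^ 2) (n := 2) (by norm_num)
    refine ⟨w, hw2, ?_⟩
    have key : (σ ^ 2 - 2 * η - 2 * w) * (σ ^ 2 - 2 * η + 2 * w) = 0 := by
      linear_combination h0 - 4 * hw2
    rcases mul_eq_zero.mp key with h | h
    · left; linear_combination h
    · right; linear_combination h
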